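/- Let μ ∈ (2,3) and x₀ ∈ (0,1). Then the trajectory x_k = f_μ^[k](x₀) of the logistic map converges to 1 − 1/μ as k → ∞, and since 1 − 1/μ > 1/2 there exists N such that x_k > 1/2 for all k ≥ N (so the digitised trajectory is eventually the all-one string). -/

import Mathlib

open Filter Topology

private lemma logistic_two_step (t a a1 a2 : ℝ) (ht0 : 0 < t) (ht1 : t < 1)
    (h1 : -t ≤ a) (h2 : a ≤ 0)
    (e1 : a1 = -a * (a + t)) (e2 : a2 = -a1 * (a1 + t)) :
    -t ≤ a2 ∧ a2 ≤ 0 ∧ -a2 ≤ t^2 * (-a) := by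
  subst e2
  subst e1
  have hb0 : 0 ≤ -a := by linarith
  have hbt : -a ≤ t := by linarith
  have hat0 : 0 ≤ a + t := by linarith
  have hsq : (a+t)^2 ≤ t := by
    nlinarith [mul_nonneg hat0 (by linarith : (0:ℝ) ≤ t - (a+t)),
      mul_nonneg ht0.le (by linarith : (0:ℝ) ≤ 1 - t),
      mul_nonneg ht0.le (by linarith : (0:ℝ) ≤ t - (a+t))]
  have key : -(-(-a * (a + t)) * (-a * (a + t) + t)) ≤ t^2 * (-a) := by
    nlinarith [mul_nonneg (sq_nonneg a) (by linarith : (0:ℝ) ≤ t - (a+t)^2)]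
  have ha1 : 0 ≤ -a * (a + t) := mul_nonneg hb0 hat0
  refine ⟨?_, by nlinarith, key⟩
  nlinarith [mul_nonneg ht0.le (mul_nonneg ht0.le (by linarith : (0:ℝ) ≤ t - (-a))),
    mul_nonneg ht0.le (mul_nonneg ht0.le (by linarith : (0:ℝ) ≤ 1 - t))]

private lemma logistic_decay (t : ℝ) (ht0 : 0 < t) (ht1 : t < 1) (a : ℕ → ℝ)
    (hrec : ∀ n, a (n+1) = -(a n) * (a n + t))
    (h1 : -t ≤ a 0) (h2 : a 0 ≤ 0) :
    Tendsto a atTop (𝓝 0) := by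
  have key : ∀ n, -t ≤ a (2*n) ∧ a (2*n) ≤ 0 ∧ -(a (2*n)) ≤ t^(2*n) * t := by
    intro n
    induction n with
    | zero => refine ⟨h1, h2, ?_⟩; norm_num; linarith
    | succ n ih =>
      obtain ⟨ih1, ih2, ih3⟩ := ih
      have e1 := hrec (2*n)
      have e2 := hrec (2*n+1)
      have hidx : 2*(n+1) = 2*n+1+1 := by ring
      obtain ⟨q1, q2, q3⟩ := logistic_two_step t (a (2*n)) (a (2*n+1)) (a (2*n+1+1))
        ht0 ht1 ih1 ih2 (by simpa using e1) (by simpa using e2)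
      rw [hidx]
      refine ⟨q1, q2, ?_⟩
      have ht2 : (0:ℝ) ≤ t^2 := sq_nonneg t
      calc -(a (2*n+1+1)) ≤ t^2 * (-(a (2*n))) := q3
        _ ≤ t^2 * (t^(2*n) * t) := by nlinarith
        _ = t^(2*n+1+1) * t := by ring
  have bound : ∀ k, |a k| ≤ t^k * t := by
    intro k
    rcases Nat.even_or_odd k with ⟨n, hn⟩ | ⟨n, hn⟩
    · have hk : k = 2*n := by omega
      subst hk
      obtain ⟨k1, k2, k3⟩ := key n
      rw [abs_of_nonpos k2]
      exact k3
    · have hk : k = 2*n+1 := by omega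
      subst hk
      obtain ⟨k1, k2, k3⟩ := key n
      have e := hrec (2*n)
      have ha1 : 0 ≤ a (2*n+1) := by rw [e]; nlinarith
      have ha1' : a (2*n+1) ≤ t * (-(a (2*n))) := by rw [e]; nlinarith
      rw [abs_of_nonneg ha1]
      calc a (2*n+1) ≤ t * (-(a (2*n))) := ha1'
        _ ≤ t * (t^(2*n) * t) := by nlinarith
        _ = t^(2*n+1) * t := by ring
  apply squeeze_zero_norm (fun k => by simpa [Real.norm_eq_abs] using bound k)
  have := (tendsto_pow_atTop_nhds_zero_of_lt_one ht0.le ht1).mul_const t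
  simpa using this

private lemma logistic_escape (t : ℝ) (ht0 : 0 < t) (ht1 : t < 1) (a : ℕ → ℝ)
    (hrec : ∀ n, a (n+1) = -(a n) * (a n + t))
    (h0 : -(1+t) < a 0) (h1 : a 0 ≤ 0) :
    ∃ m, -t ≤ a m ∧ a m ≤ 0 := by
  by_cases hc : -t ≤ a 0
  · exact ⟨0, hc, h1⟩
  push_neg at hc
  set c := a 0 with hcdef
  set δ := t * (c + 1 + t) with hδ
  have hc1t : 0 < c + 1 + t := by linarith
  have hδpos : 0 < δ := mul_pos ht0 hc1t
  have key : ∀ n, (∃ m, -t ≤ a m ∧ a m ≤ 0) ∨ (a n < -t ∧ c + n*δ ≤ a n) := by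
    intro n
    induction n with
    | zero => right; exact ⟨hc, by simp; exact hcdef.le⟩
    | succ n ih =>
      rcases ih with h | ⟨hlt, hge⟩
      · left; exact h
      have hnδ : (0:ℝ) ≤ n * δ := mul_nonneg (Nat.cast_nonneg n) hδpos.le
      have hgt : -(1+t) < a n := by nlinarith
      have e := hrec n
      have hneg : a (n+1) < 0 := by rw [e]; nlinarith
      have hgain : a n + δ ≤ a (n+1) := by
        rw [e, hδ]
        nlinarith [mul_nonneg (by linarith : (0:ℝ) ≤ -(a n) - t) (by nlinarith : (0:ℝ) ≤ a n + 1 + t),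
          mul_nonneg ht0.le (by nlinarith : (0:ℝ) ≤ a n - c)]
      by_cases h2 : -t ≤ a (n+1)
      · left; exact ⟨n+1, h2, hneg.le⟩
      · push_neg at h2
        right
        refine ⟨h2, ?_⟩
        push_cast
        nlinarith
  obtain ⟨n, hn⟩ := exists_nat_gt ((-t - c)/δ)
  rcases key n with h | ⟨hlt, hge⟩
  · exact h
  · exfalso
    have : -t - c < n * δ := by
      rw [div_lt_iff₀ hδpos] at hn
      linarith
    linarith

private lemma logistic_entry (t : ℝ) (ht0 : 0 < t) (ht1 : t < 1) (a : ℕ → ℝ)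
    (hrec : ∀ n, a (n+1) = -(a n) * (a n + t))
    (h0 : -(1+t) < a 0) (h1 : a 0 < 1) :
    ∃ m, -t ≤ a m ∧ a m ≤ 0 := by
  by_cases h : a 0 ≤ 0
  · exact logistic_escape t ht0 ht1 a hrec h0 h
  push_neg at h
  have e := hrec 0
  have hb0 : a 1 < 0 := by rw [e]; nlinarith
  have hb1 : -(1+t) < a 1 := by rw [e]; nlinarith
  obtain ⟨m, hm⟩ := logistic_escape t ht0 ht1 (fun n => a (n+1))
    (fun n => hrec (n+1)) hb1 hb0.le
  exact ⟨m+1, hm⟩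

private lemma logistic_main_aux (t : ℝ) (ht0 : 0 < t) (ht1 : t < 1) (a : ℕ → ℝ)
    (hrec : ∀ n, a (n+1) = -(a n) * (a n + t))
    (h0 : -(1+t) < a 0) (h1 : a 0 < 1) :
    Tendsto a atTop (𝓝 0) := by
  obtain ⟨m, hm1, hm2⟩ := logistic_entry t ht0 ht1 a hrec h0 h1
  have hshift : Tendsto (fun n => a (n + m)) atTop (𝓝 0) := by
    apply logistic_decay t ht0 ht1 (fun n => a (n + m))
    · intro n
      have := hrec (n + m)
      simpa [show n + 1 + m = n + m + 1 from by ring] using this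
    · simpa using hm1
    · simpa using hm2
  exact (tendsto_add_atTop_iff_nat m).mp hshift

/-- For μ ∈ (2,3) and x₀ ∈ (0,1), the logistic map trajectory converges to 1 - 1/μ,
which exceeds 1/2, and the trajectory is eventually above the threshold 1/2. -/
theorem logistic_mu_two_three_tendsto_fixed_point
    (μ : ℝ) (hμ2 : 2 < μ) (hμ3 : μ < 3) (x₀ : ℝ) (hx0 : 0 < x₀) (hx1 : x₀ < 1) :
    Tendsto (fun k => (fun x => μ * x * (1 - x))^[k] x₀) atTop (𝓝 (1 - 1/μ)) ∧
      1 - 1/μ > 1/2 ∧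
      ∃ N : ℕ, ∀ k ≥ N, (fun x => μ * x * (1 - x))^[k] x₀ > 1/2 := by
  have hμ0 : (0:ℝ) < μ := by linarith
  have hμ0' : μ ≠ 0 := ne_of_gt hμ0
  set f : ℝ → ℝ := fun x => μ * x * (1 - x) with hf
  set p : ℝ := 1 - 1/μ with hp
  set t : ℝ := μ - 2 with ht
  set a : ℕ → ℝ := fun k => μ * (f^[k] x₀ - p) with ha
  have ht0 : 0 < t := by rw [ht]; linarith
  have ht1 : t < 1 := by rw [ht]; linarith
  have hrec : ∀ n, a (n+1) = -(a n) * (a n + t) := by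
    intro n
    simp only [ha, Function.iterate_succ_apply']
    have hfx : f (f^[n] x₀) = μ * (f^[n] x₀) * (1 - f^[n] x₀) := rfl
    rw [hfx, hp, ht]
    field_simp
    ring
  have ha0 : a 0 = μ * x₀ - μ + 1 := by
    simp only [ha, Function.iterate_zero_apply, hp]
    field_simp
    ring
  have h0 : -(1+t) < a 0 := by rw [ha0, ht]; nlinarith
  have h1 : a 0 < 1 := by rw [ha0]; nlinarith
  have haten : Tendsto a atTop (𝓝 0) := logistic_main_aux t ht0 ht1 a hrec h0 h1
  have heq : ∀ k, f^[k] x₀ = a k / μ + p := by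
    intro k
    rw [ha]
    field_simp
    ring
  have hx : Tendsto (fun k => f^[k] x₀) atTop (𝓝 p) := by
    have h2 : Tendsto (fun k => a k / μ + p) atTop (𝓝 (0/μ + p)) :=
      (haten.div_const μ).add_const p
    simp only [zero_div, zero_add] at h2
    exact h2.congr (fun k => (heq k).symm)
  have hphalf : (1:ℝ)/2 < p := by
    rw [hp]
    have : 1/μ < 1/2 := by
      apply one_div_lt_one_div_of_lt <;> linarith
    linarith
  refine ⟨hx, hphalf, ?_⟩
  have hev := hx.eventually (eventually_gt_nhds hphalf)
  rw [eventually_atTop] at hev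
  exact hev
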